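/- Let u, v ∈ C²(ℝ^N) solve the system −Δu = β u^s v^{s+γ} − λ u^{2s+γ}, −Δv = β v^s u^{s+γ} − λ v^{2s+γ} with u, v ≥ 0, s ≥ 0, γ ≥ 1, β ≥ 0, λ ≥ λ₀ > 0. Suppose additionally u and v are bounded. Then u = v. -/

import Mathlib

open Real

open Filter Set Topology

noncomputable def lap {N : ℕ} (u : EuclideanSpace ℝ (Fin N) → ℝ)
    (x : EuclideanSpace ℝ (Fin N)) : ℝ :=
  ∑ i : Fin N, fderiv ℝ (fun y => fderiv ℝ u y (EuclideanSpace.single i (1:ℝ))) x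
    (EuclideanSpace.single i (1:ℝ))

/-- One-dimensional second derivative test: at a local max the 2nd derivative is ≤ 0. -/
lemma secondDeriv_nonpos_of_isLocalMax {g g' : ℝ → ℝ} {c : ℝ}
    (hg : ∀ t, HasDerivAt g (g' t) t) (hg' : HasDerivAt g' c 0)
    (hmax : IsLocalMax g 0) : c ≤ 0 := by
  by_contra hc
  push_neg at hc
  have h0 : g' 0 = 0 := by
    have h := hmax.deriv_eq_zero
    rwa [(hg 0).deriv] at h
  have hslope : Tendsto (slope g' 0) (𝓝[≠] 0) (𝓝 c) :=
    hasDerivAt_iff_tendsto_slope.mp hg'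
  have hev : ∀ᶠ t in 𝓝[≠] (0:ℝ), 0 < slope g' 0 t :=
    hslope.eventually (eventually_gt_nhds hc)
  have hev' : ∀ᶠ t in 𝓝[>] (0:ℝ), 0 < slope g' 0 t :=
    hev.filter_mono (nhdsWithin_mono 0 (fun x hx => by
      simp only [mem_compl_iff, mem_singleton_iff]
      exact ne_of_gt hx))
  obtain ⟨δ, hδpos, hδ⟩ := mem_nhdsGT_iff_exists_Ioo_subset.mp hev'
  have hpos : ∀ t ∈ Ioo (0:ℝ) δ, 0 < g' t := by
    intro t ht
    have h := hδ ht
    simp only [mem_setOf_eq, slope_def_field] at h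
    have h' : 0 < (g' t - g' 0) / (t - 0) := h
    rw [h0, sub_zero, sub_zero] at h'
    rcases div_pos_iff.mp h' with ⟨h1, _⟩ | ⟨_, h2⟩
    · exact h1
    · linarith [ht.1]
  have hδ2 : (0:ℝ) < δ / 2 := by
    have : (0:ℝ) < δ := hδpos
    linarith
  have hcont : Continuous g := by
    have : Differentiable ℝ g := fun t => (hg t).differentiableAt
    exact this.continuous
  have hmono : StrictMonoOn g (Icc 0 (δ/2)) := by
    apply strictMonoOn_of_deriv_pos (convex_Icc 0 (δ/2)) hcont.continuousOn
    intro t ht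
    rw [interior_Icc] at ht
    rw [(hg t).deriv]
    exact hpos t ⟨ht.1, by linarith [ht.2]⟩
  have h1 : ∀ᶠ t in 𝓝[>] (0:ℝ), g t ≤ g 0 := hmax.filter_mono nhdsWithin_le_nhds
  have h2 : ∀ᶠ t in 𝓝[>] (0:ℝ), t ∈ Ioo (0:ℝ) (δ/2) :=
    Ioo_mem_nhdsGT_of_mem ⟨le_refl _, hδ2⟩
  obtain ⟨t, hle, ht⟩ := (h1.and h2).exists
  have : g 0 < g t := hmono ⟨le_refl _, hδ2.le⟩ ⟨ht.1.le, ht.2.le⟩ ht.1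
  linarith

/-- Elementary inequality `(a-b)^q + b^q ≤ a^q` for `0 ≤ b ≤ a`, `1 ≤ q`. -/
lemma rpow_sub_add_rpow_le {a b q : ℝ} (hb : 0 ≤ b) (hab : b ≤ a) (hq : 1 ≤ q) :
    (a - b) ^ q + b ^ q ≤ a ^ q := by
  have hab' : 0 ≤ a - b := by linarith
  have h := NNReal.add_rpow_le_rpow_add (Real.toNNReal (a - b)) (Real.toNNReal b) hq
  have h2 := NNReal.coe_le_coe.mpr h
  rw [NNReal.coe_add, NNReal.coe_rpow, NNReal.coe_rpow, NNReal.coe_rpow, NNReal.coe_add,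
    Real.coe_toNNReal _ hab', Real.coe_toNNReal _ hb] at h2
  rwa [sub_add_cancel] at h2

lemma lap_sub {N : ℕ} {u v : EuclideanSpace ℝ (Fin N) → ℝ}
    (hu : ContDiff ℝ 2 u) (hv : ContDiff ℝ 2 v) (x : EuclideanSpace ℝ (Fin N)) :
    lap (fun y => u y - v y) x = lap u x - lap v x := by
  have hdu : Differentiable ℝ u := hu.differentiable (by simp)
  have hdv : Differentiable ℝ v := hv.differentiable (by simp)
  have hfu : Differentiable ℝ (fderiv ℝ u) :=
    (hu.fderiv_right (by norm_num : (1:WithTop ℕ∞)+1 ≤ 2)).differentiable (by simp)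
  have hfv : Differentiable ℝ (fderiv ℝ v) :=
    (hv.fderiv_right (by norm_num : (1:WithTop ℕ∞)+1 ≤ 2)).differentiable (by simp)
  unfold lap
  rw [← Finset.sum_sub_distrib]
  apply Finset.sum_congr rfl
  intro i _
  set e := EuclideanSpace.single i (1:ℝ)
  have h1 : (fun y => fderiv ℝ (fun z => u z - v z) y e)
      = fun y => fderiv ℝ u y e - fderiv ℝ v y e := by
    funext y
    rw [fderiv_fun_sub (hdu y) (hdv y)]
    rfl
  rw [h1]
  have hAu : DifferentiableAt ℝ (fun y => fderiv ℝ u y e) x :=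
    (hfu x).clm_apply (differentiableAt_const _)
  have hAv : DifferentiableAt ℝ (fun y => fderiv ℝ v y e) x :=
    (hfv x).clm_apply (differentiableAt_const _)
  rw [fderiv_fun_sub hAu hAv]
  rfl

lemma dir_second_le {N : ℕ} {ψ : EuclideanSpace ℝ (Fin N) → ℝ}
    (hψ : ContDiff ℝ 2 ψ) {ε : ℝ} (x₀ : EuclideanSpace ℝ (Fin N)) (i : Fin N)
    (hmax : ∀ y, ψ y - ε * ‖y‖^2 ≤ ψ x₀ - ε * ‖x₀‖^2) :
    fderiv ℝ (fun y => fderiv ℝ ψ y (EuclideanSpace.single i (1:ℝ))) x₀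
      (EuclideanSpace.single i (1:ℝ)) ≤ 2 * ε := by
  set e : EuclideanSpace ℝ (Fin N) := EuclideanSpace.single i (1:ℝ) with he_def
  have he : ‖e‖ = 1 := by simp [he_def, EuclideanSpace.norm_single]
  set c₀ : ℝ := inner ℝ x₀ e with hc₀
  have hψd : Differentiable ℝ ψ := hψ.differentiable (by simp)
  have hψf : Differentiable ℝ (fderiv ℝ ψ) :=
    (hψ.fderiv_right (by norm_num : (1:WithTop ℕ∞)+1 ≤ 2)).differentiable (by simp)
  have hnorm : ∀ t : ℝ, ‖x₀ + t • e‖^2 = ‖x₀‖^2 + 2*c₀*t + t^2 := by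
    intro t
    rw [norm_add_sq_real, real_inner_smul_right, norm_smul]
    simp only [he, mul_one, Real.norm_eq_abs, sq_abs]
    ring
  have hL : ∀ t : ℝ, HasDerivAt (fun t : ℝ => x₀ + t • e) e t := by
    intro t
    have h1 : HasDerivAt (fun t : ℝ => t • e) ((1:ℝ) • e) t :=
      (hasDerivAt_id t).smul_const e
    simpa using h1.const_add x₀
  set g : ℝ → ℝ := fun t => ψ (x₀ + t • e) - ε * (‖x₀‖^2 + 2*c₀*t + t^2) with hg_def
  set g' : ℝ → ℝ := fun t => fderiv ℝ ψ (x₀ + t • e) e - ε * (2*c₀ + 2*t) with hg'_def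
  have hg : ∀ t, HasDerivAt g (g' t) t := by
    intro t
    have h1 : HasDerivAt (fun t : ℝ => ψ (x₀ + t • e)) (fderiv ℝ ψ (x₀ + t • e) e) t :=
      (hψd (x₀ + t • e)).hasFDerivAt.comp_hasDerivAt t (hL t)
    have h2 : HasDerivAt (fun t : ℝ => ‖x₀‖^2 + 2*c₀*t + t^2) (2*c₀ + 2*t) t := by
      have ha := ((hasDerivAt_id t).const_mul (2*c₀)).const_add (‖x₀‖^2)
      have hb := hasDerivAt_pow 2 t
      simpa using ha.fun_add hb
    exact h1.sub (h2.const_mul ε)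
  have hg'0 : HasDerivAt g'
      (fderiv ℝ (fun y => fderiv ℝ ψ y e) x₀ e - ε * 2) 0 := by
    have hF : DifferentiableAt ℝ (fun y => fderiv ℝ ψ y e) x₀ :=
      (hψf x₀).clm_apply (differentiableAt_const _)
    have hL0 : (fun t : ℝ => x₀ + t • e) 0 = x₀ := by simp
    have h1 : HasDerivAt (fun t : ℝ => fderiv ℝ ψ (x₀ + t • e) e)
        (fderiv ℝ (fun y => fderiv ℝ ψ y e) x₀ e) 0 := by
      have hF' : HasFDerivAt (fun y => fderiv ℝ ψ y e)
          (fderiv ℝ (fun y => fderiv ℝ ψ y e) x₀) ((fun t : ℝ => x₀ + t • e) 0) := by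
        rw [hL0]; exact hF.hasFDerivAt
      exact hF'.comp_hasDerivAt 0 (hL 0)
    have h2 : HasDerivAt (fun t : ℝ => ε * (2*c₀ + 2*t)) (ε * 2) 0 := by
      have ha := ((hasDerivAt_id (0:ℝ)).const_mul (2:ℝ)).const_add (2*c₀)
      simpa using ha.const_mul ε
    exact h1.sub h2
  have hlocmax : IsLocalMax g 0 := by
    apply Filter.Eventually.of_forall
    intro t
    have := hmax (x₀ + t • e)
    rw [hnorm t] at this
    simpa [hg_def] using this
  have := secondDeriv_nonpos_of_isLocalMax hg hg'0 hlocmax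
  linarith

set_option maxHeartbeats 1000000 in
lemma key_le (N : ℕ) (hN : 1 ≤ N) (s γ β lam lam₀ : ℝ)
    (hs : 0 ≤ s) (hγ : 1 ≤ γ) (hβ : 0 ≤ β) (hlam₀ : 0 < lam₀) (hlam : lam₀ ≤ lam)
    (u v : EuclideanSpace ℝ (Fin N) → ℝ)
    (hu : ContDiff ℝ 2 u) (hv : ContDiff ℝ 2 v)
    (hupos : ∀ x, 0 ≤ u x) (hvpos : ∀ x, 0 ≤ v x)
    (hub : ∃ M, ∀ x, |u x| ≤ M) (hvb : ∃ M, ∀ x, |v x| ≤ M)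
    (hequ : ∀ x, -lap u x = β * u x ^ s * v x ^ (s + γ) - lam * u x ^ (2 * s + γ))
    (heqv : ∀ x, -lap v x = β * v x ^ s * u x ^ (s + γ) - lam * v x ^ (2 * s + γ)) :
    ∀ x, u x ≤ v x := by
  set q : ℝ := 2*s + γ with hq_def
  have hq1 : 1 ≤ q := by rw [hq_def]; linarith
  have hq0 : q ≠ 0 := by intro h; rw [h] at hq1; linarith
  obtain ⟨Mu, hMu⟩ := hub
  obtain ⟨Mv, hMv⟩ := hvb
  set ψ : EuclideanSpace ℝ (Fin N) → ℝ := fun x => u x - v x with hψ_def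
  have hψ : ContDiff ℝ 2 ψ := hu.sub hv
  have hψb : ∀ x, ψ x ≤ Mu + Mv := by
    intro x
    have h1 := abs_le.mp (hMu x)
    have h2 := abs_le.mp (hMv x)
    simp only [hψ_def]
    linarith
  have claim : ∀ ε > 0, ∀ y, ψ y ≤ (2*N*ε/lam₀)^((1:ℝ)/q) + ε*‖y‖^2 := by
    intro ε hε
    set φ : EuclideanSpace ℝ (Fin N) → ℝ := fun x => ψ x - ε*‖x‖^2 with hφ_def
    have hφc : Continuous φ :=
      hψ.continuous.sub (continuous_const.mul (continuous_norm.pow 2))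
    set B : ℝ := Mu + Mv with hB_def
    set R : ℝ := Real.sqrt (max 0 ((B - φ 0)/ε)) + 1 with hR_def
    have hsq : 0 ≤ max 0 ((B - φ 0)/ε) := le_max_left _ _
    have hRpos : 0 < R := by
      have := Real.sqrt_nonneg (max 0 ((B - φ 0)/ε))
      rw [hR_def]; linarith
    have hR2 : (B - φ 0)/ε < R^2 := by
      have h1 : Real.sqrt (max 0 ((B - φ 0)/ε)) ^ 2 = max 0 ((B - φ 0)/ε) :=
        Real.sq_sqrt hsq
      have h2 : (B - φ 0)/ε ≤ max 0 ((B - φ 0)/ε) := le_max_right _ _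
      rw [hR_def]
      nlinarith [Real.sqrt_nonneg (max 0 ((B - φ 0)/ε))]
    have hout : ∀ y, R < ‖y‖ → φ y < φ 0 := by
      intro y hy
      have h1 : ψ y ≤ B := hψb y
      have h2 : R^2 < ‖y‖^2 := by nlinarith
      have h3 : (B - φ 0)/ε < ‖y‖^2 := lt_trans hR2 h2
      have h4 : B - φ 0 < ‖y‖^2 * ε := (div_lt_iff₀ hε).mp h3
      have : φ y = ψ y - ε*‖y‖^2 := rfl
      rw [this]
      nlinarith
    obtain ⟨x₀, hx₀mem, hx₀max⟩ :=
      (isCompact_closedBall (0:EuclideanSpace ℝ (Fin N)) R).exists_isMaxOn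
        ⟨0, Metric.mem_closedBall_self hRpos.le⟩ hφc.continuousOn
    have hglob : ∀ y, φ y ≤ φ x₀ := by
      intro y
      by_cases h : ‖y‖ ≤ R
      · exact hx₀max (by simpa [Metric.mem_closedBall, dist_zero_right] using h)
      · push_neg at h
        have h0 : φ 0 ≤ φ x₀ := hx₀max (Metric.mem_closedBall_self hRpos.le)
        exact le_of_lt (lt_of_lt_of_le (hout y h) h0)
    have hglob' : ∀ y, ψ y - ε*‖y‖^2 ≤ ψ x₀ - ε*‖x₀‖^2 := hglob
    have hrpow0 : 0 ≤ (2*N*ε/lam₀)^((1:ℝ)/q) := Real.rpow_nonneg (by positivity) _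
    by_cases hcase : ψ x₀ ≤ 0
    · intro y
      have h1 := hglob' y
      have h2 : 0 ≤ ε*‖x₀‖^2 := by positivity
      calc ψ y ≤ ε*‖y‖^2 := by linarith
        _ ≤ (2*N*ε/lam₀)^((1:ℝ)/q) + ε*‖y‖^2 := by linarith
    · push_neg at hcase
      have hA : lap ψ x₀ ≤ 2*N*ε := by
        have hterm : ∀ i : Fin N,
            fderiv ℝ (fun y => fderiv ℝ ψ y (EuclideanSpace.single i (1:ℝ))) x₀
              (EuclideanSpace.single i (1:ℝ)) ≤ 2*ε :=
          fun i => dir_second_le hψ x₀ i hglob'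
        have hsum : lap ψ x₀ ≤ ∑ _i : Fin N, 2*ε :=
          Finset.sum_le_sum (fun i _ => hterm i)
        have hconst : ∑ _i : Fin N, (2*ε : ℝ) = N * (2*ε) := by
          rw [Finset.sum_const, Finset.card_univ, Fintype.card_fin, nsmul_eq_mul]
        rw [hconst] at hsum
        linarith [hsum]
      set a : ℝ := u x₀ with ha_def
      set b : ℝ := v x₀ with hb_def
      have hψx₀ : ψ x₀ = a - b := rfl
      have hba : b < a := by rw [hψx₀] at hcase; linarith
      have hbnn : 0 ≤ b := hvpos x₀
      have hann : 0 ≤ a := hupos x₀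
      have hsγ : s + γ ≠ 0 := ne_of_gt (by linarith)
      have h1 : a^s * b^(s+γ) ≤ b^s * a^(s+γ) := by
        rw [Real.rpow_add' hbnn hsγ, Real.rpow_add' hann hsγ]
        have hγab : b^γ ≤ a^γ := Real.rpow_le_rpow hbnn hba.le (by linarith)
        have h2 : 0 ≤ a^s := Real.rpow_nonneg hann s
        have h3 : 0 ≤ b^s := Real.rpow_nonneg hbnn s
        nlinarith [mul_le_mul_of_nonneg_left hγab (mul_nonneg h2 h3)]
      have h2 : (a-b)^q + b^q ≤ a^q := rpow_sub_add_rpow_le hbnn hba.le hq1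
      have habnn : (0:ℝ) ≤ a - b := by linarith
      have hlapu : lap u x₀ = lam * a^q - β * a^s * b^(s+γ) := by
        have h := hequ x₀
        rw [← ha_def, ← hb_def] at h
        linarith
      have hlapv : lap v x₀ = lam * b^q - β * b^s * a^(s+γ) := by
        have h := heqv x₀
        rw [← ha_def, ← hb_def] at h
        linarith
      have hlapψ : lap ψ x₀ = lap u x₀ - lap v x₀ := lap_sub hu hv x₀
      have hBineq : lam₀ * (a-b)^q ≤ lap ψ x₀ := by
        have hq2 : lam * (a-b)^q ≤ lam * (a^q - b^q) :=
          mul_le_mul_of_nonneg_left (by linarith) (by linarith)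
        have hq3 : lam₀ * (a-b)^q ≤ lam * (a-b)^q :=
          mul_le_mul_of_nonneg_right hlam (Real.rpow_nonneg habnn q)
        have hβ2 : 0 ≤ β * (b^s * a^(s+γ) - a^s * b^(s+γ)) :=
          mul_nonneg hβ (by linarith)
        rw [hlapψ, hlapu, hlapv]
        nlinarith
      have hfinal : ψ x₀ ≤ (2*N*ε/lam₀)^((1:ℝ)/q) := by
        have h3 : (a-b)^q ≤ 2*N*ε/lam₀ := by
          rw [le_div_iff₀ hlam₀]
          nlinarith
        have h4 : ((a-b)^q)^((1:ℝ)/q) ≤ (2*N*ε/lam₀)^((1:ℝ)/q) :=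
          Real.rpow_le_rpow (Real.rpow_nonneg habnn q) h3
            (le_of_lt (one_div_pos.mpr (by linarith)))
        have h5 : ((a-b)^q)^((1:ℝ)/q) = a - b := by
          rw [← Real.rpow_mul habnn, mul_one_div_cancel hq0, Real.rpow_one]
        rw [hψx₀, ← h5]
        exact h4
      intro y
      have h6 := hglob' y
      have h7 : 0 ≤ ε*‖x₀‖^2 := by positivity
      calc ψ y ≤ ψ x₀ + ε*‖y‖^2 := by linarith
        _ ≤ (2*N*ε/lam₀)^((1:ℝ)/q) + ε*‖y‖^2 := by linarith
  intro x
  by_contra hlt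
  push_neg at hlt
  set δ : ℝ := u x - v x with hδ_def
  have hδ : 0 < δ := by rw [hδ_def]; linarith
  have hNpos : (0:ℝ) < 2*N := by
    have : (1:ℝ) ≤ N := by exact_mod_cast hN
    linarith
  set ε : ℝ := min (lam₀*(δ/3)^q/(2*N)) (δ/(3*(‖x‖^2+1))) with hε_def
  have hε : 0 < ε := by
    apply lt_min
    · exact div_pos (mul_pos hlam₀ (Real.rpow_pos_of_pos (by linarith) q)) hNpos
    · apply div_pos (by linarith)
      positivity
  have hcl := claim ε hε x
  have hψx : ψ x = δ := rfl
  rw [hψx] at hcl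
  have he1 : (2*N*ε/lam₀)^((1:ℝ)/q) ≤ δ/3 := by
    have h1 : ε ≤ lam₀*(δ/3)^q/(2*N) := min_le_left _ _
    have h1' : ε * (2*N) ≤ lam₀*(δ/3)^q := (le_div_iff₀ hNpos).mp h1
    have h2 : 2*N*ε/lam₀ ≤ (δ/3)^q := by
      rw [div_le_iff₀ hlam₀]
      nlinarith
    have h3 : (2*N*ε/lam₀)^((1:ℝ)/q) ≤ ((δ/3)^q)^((1:ℝ)/q) :=
      Real.rpow_le_rpow (by positivity) h2 (le_of_lt (one_div_pos.mpr (by linarith)))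
    have h4 : ((δ/3)^q)^((1:ℝ)/q) = δ/3 := by
      rw [← Real.rpow_mul (by linarith : (0:ℝ) ≤ δ/3), mul_one_div_cancel hq0,
        Real.rpow_one]
    rw [h4] at h3
    exact h3
  have he2 : ε*‖x‖^2 ≤ δ/3 := by
    have h1 : ε ≤ δ/(3*(‖x‖^2+1)) := min_le_right _ _
    have h2 : ε * (3*(‖x‖^2+1)) ≤ δ := (le_div_iff₀ (by positivity)).mp h1
    nlinarith [sq_nonneg ‖x‖, hε.le]
  linarith

theorem symmetry_of_components_BE (N : ℕ) (hN : 1 ≤ N) (s γ β lam lam₀ : ℝ)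
    (hs : 0 ≤ s) (hγ : 1 ≤ γ) (hβ : 0 ≤ β) (hlam₀ : 0 < lam₀) (hlam : lam₀ ≤ lam)
    (u v : EuclideanSpace ℝ (Fin N) → ℝ)
    (hu : ContDiff ℝ 2 u) (hv : ContDiff ℝ 2 v)
    (hupos : ∀ x, 0 ≤ u x) (hvpos : ∀ x, 0 ≤ v x)
    (hub : ∃ M, ∀ x, |u x| ≤ M) (hvb : ∃ M, ∀ x, |v x| ≤ M)
    (hequ : ∀ x, -lap u x = β * u x ^ s * v x ^ (s + γ) - lam * u x ^ (2 * s + γ))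
    (heqv : ∀ x, -lap v x = β * v x ^ s * u x ^ (s + γ) - lam * v x ^ (2 * s + γ)) :
    u = v := by
  funext x
  have h1 := key_le N hN s γ β lam lam₀ hs hγ hβ hlam₀ hlam u v hu hv hupos hvpos
    hub hvb hequ heqv x
  have h2 := key_le N hN s γ β lam lam₀ hs hγ hβ hlam₀ hlam v u hv hu hvpos hupos
    hvb hub heqv hequ x
  linarith
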